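/- (Disturbance decoupled error.) Consider the disturbed system dx/dt = F(x) + E(x) W(t), y = H(x) + K(x) W(t), z = q(x), and suppose the C¹ map T : ℝ^n → ℝ^v satisfies DT(x) F(x) = A T(x) + B H(x), q(x) = C T(x) + D H(x), together with the decoupling conditions DT(x) E(x) = B K(x) and D K(x) = 0 for all x ∈ ℝ^n. Then for every disturbance signal W : ℝ → ℝ^m, every solution x(·) of the disturbed state equation, and every solution ξ̂(·) of dξ̂/dt = A ξ̂ + B(H(x(t)) + K(x(t)) W(t)), the estimate ẑ(t) = C ξ̂(t) + D(H(x(t)) + K(x(t)) W(t)) satisfies ẑ(t) − q(x(t)) = C exp(tA)(ξ̂(0) − T(x(0))) for all t ≥ 0; in particular the estimation error is completely unaffected by W. -/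

import Mathlib

open Matrix

section Aux

attribute [local instance] Matrix.linftyOpSemiNormedRing Matrix.linftyOpNormedRing
  Matrix.linftyOpNormedAlgebra

private def entryL {v : ℕ} (i j : Fin v) : Matrix (Fin v) (Fin v) ℝ →ₗ[ℝ] ℝ where
  toFun N := N i j
  map_add' _ _ := rfl
  map_smul' _ _ := rfl

lemma matExpNeg_entry_hasDerivAt {v : ℕ} (A : Matrix (Fin v) (Fin v) ℝ) (u : ℝ) (i j : Fin v) :
    HasDerivAt (fun s : ℝ => NormedSpace.exp ((-s) • A) i j)
      ((-(NormedSpace.exp ((-u) • A) * A)) i j) u := by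
  have h1 : HasDerivAt (fun s : ℝ => NormedSpace.exp ((-s) • A))
      (-(NormedSpace.exp ((-u) • A) * A)) u := by
    have h := (hasDerivAt_exp_smul_const A (-u)).scomp u (hasDerivAt_neg u)
    simp only [Function.comp_def, neg_one_smul] at h
    exact h
  exact ((entryL i j).toContinuousLinearMap.hasFDerivAt.comp_hasDerivAt u h1)

lemma matExp_mul_matExp_neg {v : ℕ} (A : Matrix (Fin v) (Fin v) ℝ) (t : ℝ) :
    NormedSpace.exp (t • A) * NormedSpace.exp ((-t) • A) = 1 := by
  rw [← Matrix.exp_add_of_commute _ _ (by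
    simpa using ((Commute.refl A).smul_left t).smul_right (-t))]
  simp [← add_smul, NormedSpace.exp_zero]

end Aux

lemma ode_lin {v : ℕ} (A : Matrix (Fin v) (Fin v) ℝ) (e : ℝ → Fin v → ℝ)
    (he : ∀ t, HasDerivAt e (A.mulVec (e t)) t) (t : ℝ) :
    e t = (NormedSpace.exp (t • A)).mulVec (e 0) := by
  set φ : ℝ → Fin v → ℝ := fun u => (NormedSpace.exp ((-u) • A)).mulVec (e u) with hφ
  have hφd : ∀ u, HasDerivAt φ 0 u := by
    intro u
    rw [hasDerivAt_pi]
    intro i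
    have hsum : HasDerivAt (fun s => ∑ j, NormedSpace.exp ((-s) • A) i j * e s j)
        (∑ j, ((-(NormedSpace.exp ((-u) • A) * A)) i j * e u j
          + NormedSpace.exp ((-u) • A) i j * A.mulVec (e u) j)) u :=
      HasDerivAt.fun_sum fun j _ =>
        (matExpNeg_entry_hasDerivAt A u i j).mul (hasDerivAt_pi.1 (he u) j)
    have hz : (∑ j, ((-(NormedSpace.exp ((-u) • A) * A)) i j * e u j
          + NormedSpace.exp ((-u) • A) i j * A.mulVec (e u) j)) = 0 := by
      simp only [Matrix.neg_apply, Matrix.mul_apply, Matrix.mulVec, dotProduct,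
        neg_mul, Finset.sum_add_distrib]
      have hswap : ∑ j, (∑ k, NormedSpace.exp ((-u) • A) i k * A k j) * e u j
          = ∑ j, NormedSpace.exp ((-u) • A) i j * ∑ k, A j k * e u k := by
        simp_rw [Finset.sum_mul, Finset.mul_sum]
        rw [Finset.sum_comm]
        simp_rw [mul_assoc]
      rw [Finset.sum_neg_distrib, hswap]
      simp
    rw [hz] at hsum
    have : (fun s => ∑ j, NormedSpace.exp ((-s) • A) i j * e s j) = fun s => φ s i := by
      funext s; simp [hφ, Matrix.mulVec, dotProduct]
    rw [this] at hsum
    simpa using hsum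
  have hconst : φ t = φ 0 :=
    is_const_of_deriv_eq_zero (fun u => (hφd u).differentiableAt)
      (fun u => (hφd u).deriv) t 0
  have h0 : φ 0 = e 0 := by simp [hφ, NormedSpace.exp_zero]
  have hinv : (NormedSpace.exp (t • A)).mulVec (φ t) = e t := by
    rw [hφ, Matrix.mulVec_mulVec, matExp_mul_matExp_neg, Matrix.one_mulVec]
  rw [← hinv, hconst, h0]


/-- **disturbance decoupled error.** For the disturbed system
`dx/dt = F(x) + E(x) W(t)`, `y = H(x) + K(x) W(t)`, `z = q(x)`, if the C¹ map `T`
satisfies `DT(x) F(x) = A T(x) + B H(x)`, `q(x) = C T(x) + D H(x)` together with the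
decoupling conditions `DT(x) E(x) = B K(x)` and `D K(x) = 0` for all `x`, then for every
disturbance `W`, every solution `x(·)` and every solution `ξ̂(·)` of
`dξ̂/dt = A ξ̂ + B y(t)` the estimate `ẑ(t) = C ξ̂(t) + D y(t)` satisfies
`ẑ(t) − q(x(t)) = C exp(t A)(ξ̂(0) − T(x(0)))` for all `t ≥ 0`: the estimation error is
completely unaffected by `W`. -/
theorem stmt6
    {n v p m : ℕ}
    (F : (Fin n → ℝ) → (Fin n → ℝ)) (H : (Fin n → ℝ) → (Fin p → ℝ))
    (q : (Fin n → ℝ) → ℝ)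
    (E : (Fin n → ℝ) → Matrix (Fin n) (Fin m) ℝ)
    (K : (Fin n → ℝ) → Matrix (Fin p) (Fin m) ℝ)
    (A : Matrix (Fin v) (Fin v) ℝ) (B : Matrix (Fin v) (Fin p) ℝ)
    (C : Fin v → ℝ) (D : Fin p → ℝ)
    (T : (Fin n → ℝ) → (Fin v → ℝ)) (hT : ContDiff ℝ 1 T)
    (hPDE : ∀ x : Fin n → ℝ, fderiv ℝ T x (F x) = A.mulVec (T x) + B.mulVec (H x))
    (hOut : ∀ x : Fin n → ℝ, q x = C ⬝ᵥ T x + D ⬝ᵥ H x)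
    (hdec1 : ∀ (x : Fin n → ℝ) (w : Fin m → ℝ),
      fderiv ℝ T x ((E x).mulVec w) = B.mulVec ((K x).mulVec w))
    (hdec2 : ∀ x : Fin n → ℝ, D ᵥ* K x = 0)
    (W : ℝ → (Fin m → ℝ)) (hW : Continuous W)
    (x : ℝ → (Fin n → ℝ))
    (hx : ∀ t : ℝ, HasDerivAt x (F (x t) + (E (x t)).mulVec (W t)) t)
    (ξ : ℝ → (Fin v → ℝ))
    (hξ : ∀ t : ℝ, HasDerivAt ξ
      (A.mulVec (ξ t) + B.mulVec (H (x t) + (K (x t)).mulVec (W t))) t) :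
    ∀ t : ℝ, 0 ≤ t →
      (C ⬝ᵥ ξ t + D ⬝ᵥ (H (x t) + (K (x t)).mulVec (W t))) - q (x t)
        = C ⬝ᵥ (NormedSpace.exp (t • A)).mulVec (ξ 0 - T (x 0)) := by
  intro t ht
  have hTx : ∀ u, HasDerivAt (fun s => T (x s))
      (A.mulVec (T (x u)) + B.mulVec (H (x u)) + B.mulVec ((K (x u)).mulVec (W u))) u := by
    intro u
    have hder := ((hT.differentiable one_ne_zero (x u)).hasFDerivAt).comp_hasDerivAt u (hx u)
    rwa [map_add, hPDE, hdec1] at hder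
  have he : ∀ u, HasDerivAt (fun s => ξ s - T (x s))
      (A.mulVec ((fun s => ξ s - T (x s)) u)) u := by
    intro u
    have h1 := (hξ u).sub (hTx u)
    have h2 : A.mulVec (ξ u) + B.mulVec (H (x u) + (K (x u)).mulVec (W u))
        - (A.mulVec (T (x u)) + B.mulVec (H (x u)) + B.mulVec ((K (x u)).mulVec (W u)))
        = A.mulVec ((fun s => ξ s - T (x s)) u) := by
      simp only [Matrix.mulVec_add, Matrix.mulVec_sub]
      abel
    rwa [h2] at h1
  have key := ode_lin A (fun s => ξ s - T (x s)) he t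
  have hD : D ⬝ᵥ (K (x t)).mulVec (W t) = 0 := by
    rw [Matrix.dotProduct_mulVec, hdec2]
    simp
  rw [hOut, dotProduct_add, hD, ← key, dotProduct_sub]
  ring
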